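/- arXiv:1603.03717 — 2 statements merged into one kernel-verified Lean document; each statement's English description precedes it below -/
import Mathlib

section
/- Let A be an N₁×N₂ complex matrix with at least r_A singular values ≥ ε_A, and let B be an N₂×N₃ complex matrix with at least r_B singular values ≥ ε_B, where ε_A, ε_B > 0. Then the product BA (a matrix from the N₁-dimensional space to the N₃-dimensional space composed appropriately) has at least r_A + r_B − N₂ singular values ≥ ε_A·ε_B. -/
open Matrix Finset
open scoped InnerProductSpace

/-- The number of singular values of a matrix `M` (square roots of eigenvalues of `MᴴM`,
with multiplicity) that are at least `ε`. -/
noncomputable def svCountGe {p q : ℕ} (M : Matrix (Fin p) (Fin q) ℂ) (ε : ℝ) : ℕ :=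
  (Finset.univ.filter fun i : Fin q =>
    ε ^ 2 ≤ (Matrix.isHermitian_conjTranspose_mul_self M).eigenvalues i).card

variable {p q : ℕ}

lemma normsq_apply_eq_sum (M : Matrix (Fin p) (Fin q) ℂ) (x : EuclideanSpace ℂ (Fin q)) :
    ‖Matrix.toEuclideanLin M x‖ ^ 2 =
      ∑ i, (Matrix.isHermitian_conjTranspose_mul_self M).eigenvalues i *
        ‖⟪(Matrix.isHermitian_conjTranspose_mul_self M).eigenvectorBasis i, x⟫_ℂ‖ ^ 2 := by
  set hH := Matrix.isHermitian_conjTranspose_mul_self M with hHdef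
  set e := hH.eigenvectorBasis with hedef
  have h1 : Matrix.toEuclideanLin (Mᴴ * M) =
      LinearMap.adjoint (Matrix.toEuclideanLin M) ∘ₗ Matrix.toEuclideanLin M := by
    rw [← Matrix.toEuclideanLin_conjTranspose_eq_adjoint]
    apply LinearMap.ext; intro v
    simp [Matrix.toEuclideanLin_apply, Matrix.mulVec_mulVec]
  have h2 : (‖Matrix.toEuclideanLin M x‖ ^ 2 : ℝ)
      = Complex.re ⟪x, Matrix.toEuclideanLin (Mᴴ * M) x⟫_ℂ := by
    rw [h1]
    simp only [LinearMap.comp_apply, LinearMap.adjoint_inner_right]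
    exact (inner_self_eq_norm_sq (𝕜 := ℂ) _).symm
  have he : ∀ i, Matrix.toEuclideanLin (Mᴴ * M) (e i)
      = (hH.eigenvalues i : ℂ) • e i := by
    intro i
    apply PiLp.ext; intro j
    have := congrFun (hH.mulVec_eigenvectorBasis i) j
    simpa [Matrix.toEuclideanLin_apply] using this
  have h3 : ⟪x, Matrix.toEuclideanLin (Mᴴ * M) x⟫_ℂ
      = ∑ i, (hH.eigenvalues i : ℂ) * (⟪e i, x⟫_ℂ * (starRingEnd ℂ) ⟪e i, x⟫_ℂ) := by
    have hx := e.sum_repr' x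
    calc ⟪x, Matrix.toEuclideanLin (Mᴴ * M) x⟫_ℂ
        = ⟪x, Matrix.toEuclideanLin (Mᴴ * M) (∑ i, ⟪e i, x⟫_ℂ • e i)⟫_ℂ := by rw [hx]
      _ = ∑ i, ⟪x, ⟪e i, x⟫_ℂ • ((hH.eigenvalues i : ℂ) • e i)⟫_ℂ := by
          rw [map_sum, inner_sum]
          exact Finset.sum_congr rfl fun i _ => by rw [LinearMap.map_smul, he i]
      _ = ∑ i, (hH.eigenvalues i : ℂ) * (⟪e i, x⟫_ℂ * (starRingEnd ℂ) ⟪e i, x⟫_ℂ) := by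
          refine Finset.sum_congr rfl fun i _ => ?_
          rw [inner_smul_right, inner_smul_right, ← inner_conj_symm x (e i)]
          ring
  rw [h2, h3, Complex.re_sum]
  refine Finset.sum_congr rfl fun i _ => ?_
  rw [Complex.mul_conj, ← Complex.ofReal_mul, Complex.ofReal_re, Complex.normSq_eq_norm_sq]

lemma norm_sq_eq_sum_ob {n : ℕ} (e : OrthonormalBasis (Fin n) ℂ (EuclideanSpace ℂ (Fin n)))
    (x : EuclideanSpace ℂ (Fin n)) : ‖x‖ ^ 2 = ∑ i, ‖⟪e i, x⟫_ℂ‖ ^ 2 := by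
  have h := e.repr.norm_map x
  rw [← h, EuclideanSpace.norm_eq]
  rw [Real.sq_sqrt (by positivity)]
  exact Finset.sum_congr rfl fun i _ => by rw [e.repr_apply_apply]

lemma repr_zero_of_mem_span {n : ℕ} (e : OrthonormalBasis (Fin n) ℂ (EuclideanSpace ℂ (Fin n)))
    (s : Finset (Fin n)) {x : EuclideanSpace ℂ (Fin n)}
    (hx : x ∈ Submodule.span ℂ (e '' (s : Set (Fin n)))) :
    ∀ i ∉ s, ⟪e i, x⟫_ℂ = 0 := by
  intro i hi
  induction hx using Submodule.span_induction with
  | mem y hy =>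
    obtain ⟨j, hj, rfl⟩ := hy
    have : i ≠ j := by rintro rfl; exact hi hj
    simpa [this] using e.orthonormal.2 this
  | zero => simp
  | add y z _ _ hy hz => rw [inner_add_right, hy, hz, add_zero]
  | smul c y _ hy => rw [inner_smul_right, hy, mul_zero]

lemma finrank_span_image {n : ℕ} (e : OrthonormalBasis (Fin n) ℂ (EuclideanSpace ℂ (Fin n)))
    (s : Finset (Fin n)) :
    Module.finrank ℂ (Submodule.span ℂ (e '' (s : Set (Fin n)))) = s.card := by
  have hli : LinearIndependent ℂ (fun i : {i // i ∈ s} => e i) :=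
    e.orthonormal.linearIndependent.comp Subtype.val Subtype.val_injective
  have hr : Set.range (fun i : {i // i ∈ s} => e i) = e '' (s : Set (Fin n)) := by
    ext y; simp [Set.mem_image]
  rw [← hr, finrank_span_eq_card hli, Fintype.card_coe]

lemma svCountGe_ge_of_subspace {p q : ℕ} (M : Matrix (Fin p) (Fin q) ℂ) {ε : ℝ} (hε : 0 ≤ ε)
    (V : Submodule ℂ (EuclideanSpace ℂ (Fin q)))
    (hV : ∀ x ∈ V, ε * ‖x‖ ≤ ‖Matrix.toEuclideanLin M x‖) :
    Module.finrank ℂ V ≤ svCountGe M ε := by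
  classical
  set hH := Matrix.isHermitian_conjTranspose_mul_self M with hHdef
  set e := hH.eigenvectorBasis with hedef
  set S : Finset (Fin q) := Finset.univ.filter (fun i => ε ^ 2 ≤ hH.eigenvalues i) with hSdef
  set W := Submodule.span ℂ (e '' ((Sᶜ : Finset (Fin q)) : Set (Fin q))) with hWdef
  have hdisj : V ⊓ W = ⊥ := by
    rw [Submodule.eq_bot_iff]
    rintro x ⟨hxV, hxW⟩
    by_contra hx0
    have hzero : ∀ i ∈ S, ⟪e i, x⟫_ℂ = 0 := fun i hi =>
      repr_zero_of_mem_span e Sᶜ hxW i (by simpa using hi)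
    obtain ⟨j, hj⟩ : ∃ j, ⟪e j, x⟫_ℂ ≠ 0 := by
      by_contra h
      push_neg at h
      apply hx0
      have : ‖x‖ ^ 2 = 0 := by rw [norm_sq_eq_sum_ob e]; simp [h]
      exact norm_eq_zero.mp ((pow_eq_zero_iff (by norm_num : (2:ℕ) ≠ 0)).mp this)
    have hjS : j ∉ S := fun hjS => hj (hzero j hjS)
    have hjlt : hH.eigenvalues j < ε ^ 2 := by
      by_contra h
      exact hjS (by simp [hSdef, not_lt.mp h])
    have hlt : ‖Matrix.toEuclideanLin M x‖ ^ 2 < ε ^ 2 * ‖x‖ ^ 2 := by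
      rw [normsq_apply_eq_sum, norm_sq_eq_sum_ob e, Finset.mul_sum]
      refine Finset.sum_lt_sum (fun i _ => ?_) ⟨j, Finset.mem_univ j, ?_⟩
      · by_cases hiS : i ∈ S
        · rw [hzero i hiS]; simp
        · have : hH.eigenvalues i < ε ^ 2 := by
            by_contra h
            exact hiS (by simp [hSdef, not_lt.mp h])
          exact mul_le_mul_of_nonneg_right this.le (by positivity)
      · have : (0:ℝ) < ‖⟪e j, x⟫_ℂ‖ ^ 2 := pow_pos (norm_pos_iff.mpr hj) 2
        exact (mul_lt_mul_of_pos_right hjlt this)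
    have hle := hV x hxV
    have := pow_le_pow_left₀ (by positivity) hle 2
    rw [mul_pow] at this
    linarith
  have h1 := Submodule.finrank_sup_add_finrank_inf_eq V W
  rw [hdisj, finrank_bot, add_zero] at h1
  have h2 : Module.finrank ℂ ↥(V ⊔ W) ≤ q := by
    have := Submodule.finrank_le (V ⊔ W)
    rwa [finrank_euclideanSpace_fin] at this
  have h3 : Module.finrank ℂ W = (Sᶜ : Finset (Fin q)).card := finrank_span_image e Sᶜ
  have h4 : (Sᶜ : Finset (Fin q)).card = q - S.card := by
    rw [Finset.card_compl, Fintype.card_fin]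
  have h5 : S.card ≤ q := le_trans (Finset.card_le_card (Finset.subset_univ S))
    (by simp)
  have : svCountGe M ε = S.card := rfl
  omega

lemma exists_good_subspace {p q : ℕ} (M : Matrix (Fin p) (Fin q) ℂ) {ε : ℝ} (hε : 0 ≤ ε) :
    ∃ V : Submodule ℂ (EuclideanSpace ℂ (Fin q)),
      Module.finrank ℂ V = svCountGe M ε ∧
      ∀ x ∈ V, ε * ‖x‖ ≤ ‖Matrix.toEuclideanLin M x‖ := by
  classical
  set hH := Matrix.isHermitian_conjTranspose_mul_self M with hHdef
  set e := hH.eigenvectorBasis with hedef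
  set S : Finset (Fin q) := Finset.univ.filter (fun i => ε ^ 2 ≤ hH.eigenvalues i) with hSdef
  refine ⟨Submodule.span ℂ (e '' (S : Set (Fin q))), finrank_span_image e S, ?_⟩
  intro x hx
  have hzero : ∀ i ∉ S, ⟪e i, x⟫_ℂ = 0 := repr_zero_of_mem_span e S hx
  have hsq : (ε * ‖x‖) ^ 2 ≤ ‖Matrix.toEuclideanLin M x‖ ^ 2 := by
    rw [mul_pow, normsq_apply_eq_sum, norm_sq_eq_sum_ob e, Finset.mul_sum]
    refine Finset.sum_le_sum (fun i _ => ?_)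
    by_cases hiS : i ∈ S
    · have : ε ^ 2 ≤ hH.eigenvalues i := by
        have := Finset.mem_filter.mp hiS; exact this.2
      exact mul_le_mul_of_nonneg_right this (by positivity)
    · rw [hzero i hiS]; simp
  have h1 := Real.sqrt_le_sqrt hsq
  rwa [Real.sqrt_sq (by positivity), Real.sqrt_sq (by positivity)] at h1

/-- If `A : ℂ^{N₁} → ℂ^{N₂}` has at least `r_A` singular values `≥ ε_A` and
`B : ℂ^{N₂} → ℂ^{N₃}` has at least `r_B` singular values `≥ ε_B` (with `ε_A, ε_B > 0`),
then `B·A` has at least `r_A + r_B − N₂` singular values `≥ ε_A·ε_B`. -/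
theorem stmt_3 {N₁ N₂ N₃ : ℕ} (A : Matrix (Fin N₂) (Fin N₁) ℂ) (B : Matrix (Fin N₃) (Fin N₂) ℂ)
    (rA rB : ℕ) (εA εB : ℝ) (hεA : 0 < εA) (hεB : 0 < εB)
    (hA : rA ≤ svCountGe A εA) (hB : rB ≤ svCountGe B εB) :
    (rA : ℤ) + rB - N₂ ≤ svCountGe (B * A) (εA * εB) := by
  classical
  obtain ⟨VA, hVAfr, hVAb⟩ := exists_good_subspace A hεA.le
  obtain ⟨VB, hVBfr, hVBb⟩ := exists_good_subspace B hεB.le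
  set fA := Matrix.toEuclideanLin A with hfA
  set fB := Matrix.toEuclideanLin B with hfB
  set C := Submodule.comap fA VB with hC
  set U := VA ⊓ C with hU
  -- rank bound on C
  set g := VB.mkQ ∘ₗ fA with hg
  have hker : LinearMap.ker g = C := by
    rw [hg, LinearMap.ker_comp, Submodule.ker_mkQ]
  have h1 := LinearMap.finrank_range_add_finrank_ker g
  rw [hker, finrank_euclideanSpace_fin] at h1
  have h2 : Module.finrank ℂ (LinearMap.range g) + Module.finrank ℂ VB ≤ N₂ := by
    have ha := Submodule.finrank_quotient_add_finrank VB
    rw [finrank_euclideanSpace_fin] at ha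
    have hb : Module.finrank ℂ (LinearMap.range g) ≤
        Module.finrank ℂ (EuclideanSpace ℂ (Fin N₂) ⧸ VB) := Submodule.finrank_le _
    omega
  have h3 := Submodule.finrank_sup_add_finrank_inf_eq VA C
  have h4 : Module.finrank ℂ ↥(VA ⊔ C) ≤ N₁ := by
    have := Submodule.finrank_le (VA ⊔ C)
    rwa [finrank_euclideanSpace_fin] at this
  -- bound on U
  have hUb : ∀ x ∈ U, (εA * εB) * ‖x‖ ≤ ‖Matrix.toEuclideanLin (B * A) x‖ := by
    intro x hx
    have hxA : εA * ‖x‖ ≤ ‖fA x‖ := hVAb x hx.1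
    have hxC : fA x ∈ VB := hx.2
    have hxB : εB * ‖fA x‖ ≤ ‖fB (fA x)‖ := hVBb _ hxC
    have hBA : Matrix.toEuclideanLin (B * A) x = fB (fA x) := by
      apply PiLp.ext; intro j
      simp [hfA, hfB, Matrix.toEuclideanLin_apply, Matrix.mulVec_mulVec]
    rw [hBA]
    calc (εA * εB) * ‖x‖ = εB * (εA * ‖x‖) := by ring
      _ ≤ εB * ‖fA x‖ := mul_le_mul_of_nonneg_left hxA hεB.le
      _ ≤ ‖fB (fA x)‖ := hxB
  have hfin := svCountGe_ge_of_subspace (B * A) (by positivity) U hUb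
  have hUrank : Module.finrank ℂ ↥(VA ⊓ C) = Module.finrank ℂ ↥U := rfl
  omega
end

section
/- Let A be a random positive semidefinite random matrix of size D×D (measurable over a probability space) with E[tr(A)] ≥ (1 − δ)·α·D and E[tr(A²)] ≤ (1 + δ)·α²·D for some α > 0 and 0 ≤ δ < 1. Then there exists a sample point where rank(A) ≥ D·(1−δ)²/(1+δ). -/
open Matrix MeasureTheory Finset
open scoped ComplexOrder

section aux

variable {D : ℕ} {M : Matrix (Fin D) (Fin D) ℂ}

lemma aux_trace_eq (h : M.IsHermitian) : M.trace = ∑ i, (h.eigenvalues i : ℂ) := by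
  conv_lhs => rw [h.spectral_theorem, Unitary.conjStarAlgAut_apply]
  rw [Matrix.trace_mul_cycle, Unitary.coe_star_mul_self, Matrix.one_mul, Matrix.trace_diagonal]
  simp [Function.comp]

lemma aux_trace_sq_eq (h : M.IsHermitian) : (M ^ 2).trace = ∑ i, (h.eigenvalues i : ℂ) ^ 2 := by
  set U := (h.eigenvectorUnitary : Matrix (Fin D) (Fin D) ℂ) with hU
  set dg := Matrix.diagonal (RCLike.ofReal ∘ h.eigenvalues : Fin D → ℂ) with hdg
  have key : star U * U = 1 := Unitary.coe_star_mul_self _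
  have hd : M ^ 2 = U * (dg * dg) * star U := by
    conv_lhs => rw [sq, h.spectral_theorem, Unitary.conjStarAlgAut_apply]
    calc U * dg * star U * (U * dg * star U)
        = U * (dg * ((star U * U) * (dg * star U))) := by
          simp only [Matrix.mul_assoc]
      _ = U * (dg * dg) * star U := by rw [key, Matrix.one_mul]; simp [Matrix.mul_assoc]
  rw [hd, Matrix.trace_mul_cycle, key, Matrix.one_mul, hdg, Matrix.diagonal_mul_diagonal,
    Matrix.trace_diagonal]
  simp [Function.comp, sq]

lemma aux_trace_re (h : M.IsHermitian) : M.trace.re = ∑ i, h.eigenvalues i := by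
  rw [aux_trace_eq h]
  simp

lemma aux_trace_sq_re (h : M.IsHermitian) : (M ^ 2).trace.re = ∑ i, h.eigenvalues i ^ 2 := by
  rw [aux_trace_sq_eq h]
  simp [← Complex.ofReal_pow]

lemma aux_sq_nonneg (h : M.IsHermitian) : 0 ≤ (M ^ 2).trace.re := by
  rw [aux_trace_sq_re h]
  positivity

lemma aux_cs (hM : M.PosSemidef) :
    M.trace.re ^ 2 ≤ (M.rank : ℝ) * (M ^ 2).trace.re := by
  classical
  have h := hM.1
  rw [aux_trace_re h, aux_trace_sq_re h]
  have hrank : (M.rank : ℝ) = ((Finset.univ.filter (fun i => h.eigenvalues i ≠ 0)).card : ℝ) := by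
    rw [h.rank_eq_card_non_zero_eigs]
    norm_cast
    simp [Fintype.card_subtype]
  rw [hrank]
  set s := Finset.univ.filter (fun i => h.eigenvalues i ≠ 0) with hs
  have h1 : ∑ i, h.eigenvalues i = ∑ i ∈ s, h.eigenvalues i := by
    rw [hs]
    exact (Finset.sum_filter_ne_zero _).symm
  rw [h1]
  calc (∑ i ∈ s, h.eigenvalues i) ^ 2 ≤ (s.card : ℝ) * ∑ i ∈ s, h.eigenvalues i ^ 2 :=
        sq_sum_le_card_mul_sum_sq
    _ ≤ (s.card : ℝ) * ∑ i, h.eigenvalues i ^ 2 :=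
        mul_le_mul_of_nonneg_left
          (Finset.sum_le_sum_of_subset_of_nonneg (Finset.subset_univ s)
            (fun i _ _ => sq_nonneg _)) (Nat.cast_nonneg _)

end aux

/-- If a random `D×D` PSD matrix `A` satisfies `E[tr A] ≥ (1−δ)·α·D` and
`E[tr A²] ≤ (1+δ)·α²·D` with `α > 0`, `0 ≤ δ < 1`, then at some sample point
`rank A ≥ D·(1−δ)²/(1+δ)`. -/
theorem stmt_16 {Ω : Type*} [MeasurableSpace Ω] (μ : MeasureTheory.Measure Ω)
    [IsProbabilityMeasure μ] {D : ℕ} (A : Ω → Matrix (Fin D) (Fin D) ℂ)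
    (hmeas : ∀ i j, Measurable fun ω => A ω i j) (hpsd : ∀ ω, (A ω).PosSemidef)
    (α δ : ℝ) (hα : 0 < α) (hδ0 : 0 ≤ δ) (hδ1 : δ < 1)
    (hint1 : Integrable (fun ω => (A ω).trace.re) μ)
    (hint2 : Integrable (fun ω => ((A ω) ^ 2).trace.re) μ)
    (h1 : (1 - δ) * α * D ≤ ∫ ω, (A ω).trace.re ∂μ)
    (h2 : (∫ ω, ((A ω) ^ 2).trace.re ∂μ) ≤ (1 + δ) * α ^ 2 * D) :
    ∃ ω : Ω, (D : ℝ) * (1 - δ) ^ 2 / (1 + δ) ≤ ((A ω).rank : ℝ) := by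
  classical
  have hne : Nonempty Ω := by
    by_contra h
    have : IsEmpty Ω := not_nonempty_iff.mp h
    exact (IsProbabilityMeasure.ne_zero μ) (μ.eq_zero_of_isEmpty)
  rcases Nat.eq_zero_or_pos D with hD | hD
  · obtain ⟨ω⟩ := hne
    refine ⟨ω, ?_⟩
    subst hD
    simp
  -- setup
  set f : Ω → ℝ := fun ω => (A ω).trace.re with hf
  set g : Ω → ℝ := fun ω => ((A ω) ^ 2).trace.re with hg
  set T : ℝ := ∫ ω, f ω ∂μ with hT
  set S : ℝ := ∫ ω, g ω ∂μ with hS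
  have hδp : (0:ℝ) < 1 + δ := by linarith
  have hDpos : (0:ℝ) < D := by exact_mod_cast hD
  set r : ℝ := (D : ℝ) * (1 - δ) ^ 2 / (1 + δ) with hr
  have hrpos : 0 < r := by
    apply div_pos _ hδp
    have h1δ : (0:ℝ) < (1 - δ) ^ 2 := by
      have : (0:ℝ) < 1 - δ := by linarith
      positivity
    exact mul_pos hDpos h1δ
  by_contra hcon
  push_neg at hcon
  set k : ℕ := ⌈r⌉₊ - 1 with hk
  have hceil : 1 ≤ ⌈r⌉₊ := Nat.one_le_ceil_iff.mpr hrpos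
  have hkr : (k : ℝ) < r := by
    have ha : (⌈r⌉₊ : ℝ) < r + 1 := Nat.ceil_lt_add_one hrpos.le
    have hb : (k : ℝ) = (⌈r⌉₊ : ℝ) - 1 := by
      rw [hk, Nat.cast_sub hceil]
      norm_num
    linarith
  have hrank : ∀ ω, (A ω).rank ≤ k := by
    intro ω
    have h0 := hcon ω
    have hlt : (A ω).rank < ⌈r⌉₊ := by
      have : ((A ω).rank : ℝ) < (⌈r⌉₊ : ℝ) := lt_of_lt_of_le h0 (Nat.le_ceil r)
      exact_mod_cast this
    omega
  have hfm : Measurable f := by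
    have he : f = fun ω => ∑ i, (A ω i i).re := by
      funext ω
      simp [hf, Matrix.trace, Matrix.diag, Complex.re_sum]
    rw [he]
    exact Finset.measurable_sum _ (fun i _ => Complex.measurable_re.comp (hmeas i i))
  have hgnn : ∀ ω, 0 ≤ g ω := fun ω => aux_sq_nonneg (hpsd ω).1
  have hpt : ∀ ω, f ω ^ 2 ≤ (k : ℝ) * g ω := by
    intro ω
    calc f ω ^ 2 ≤ ((A ω).rank : ℝ) * g ω := aux_cs (hpsd ω)
      _ ≤ (k : ℝ) * g ω := by
          apply mul_le_mul_of_nonneg_right _ (hgnn ω)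
          exact_mod_cast hrank ω
  have hf2int : Integrable (fun ω => f ω ^ 2) μ := by
    apply Integrable.mono' (hint2.const_mul (k : ℝ))
    · exact (hfm.pow_const 2).aestronglyMeasurable
    · filter_upwards with ω
      rw [Real.norm_eq_abs, abs_of_nonneg (sq_nonneg _)]
      exact hpt ω
  have hjensen : T ^ 2 ≤ ∫ ω, f ω ^ 2 ∂μ := by
    have hnn : 0 ≤ ∫ ω, (f ω - T) ^ 2 ∂μ := integral_nonneg fun ω => sq_nonneg _
    have e1 : ∫ ω, (f ω - T) ^ 2 ∂μ
        = ∫ ω, ((fun ω => f ω ^ 2 - 2 * T * f ω) ω + (fun _ : Ω => T ^ 2) ω) ∂μ := by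
      congr 1
      funext ω
      ring
    have hi : Integrable (fun ω => f ω ^ 2 - 2 * T * f ω) μ := by
      exact hf2int.sub (hint1.const_mul (2 * T))
    have e2 : ∫ ω, ((fun ω => f ω ^ 2 - 2 * T * f ω) ω + (fun _ : Ω => T ^ 2) ω) ∂μ
        = (∫ ω, (f ω ^ 2 - 2 * T * f ω) ∂μ) + T ^ 2 := by
      rw [integral_add hi (integrable_const _)]
      simp
    have e3 : ∫ ω, (f ω ^ 2 - 2 * T * f ω) ∂μ
        = (∫ ω, f ω ^ 2 ∂μ) - 2 * T * T := by
      rw [integral_sub hf2int (by exact hint1.const_mul (2 * T) :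
        Integrable (fun ω => 2 * T * f ω) μ), integral_const_mul]
    nlinarith [hnn, e1, e2, e3]
  have hintle : ∫ ω, f ω ^ 2 ∂μ ≤ (k : ℝ) * S := by
    have : ∫ ω, f ω ^ 2 ∂μ ≤ ∫ ω, (k : ℝ) * g ω ∂μ :=
      integral_mono hf2int (hint2.const_mul _) hpt
    rwa [integral_const_mul] at this
  have hSnn : 0 ≤ S := integral_nonneg hgnn
  have hrS : r * S ≤ T ^ 2 := by
    have hT1 : (1 - δ) * α * D ≤ T := h1
    have hS1 : S ≤ (1 + δ) * α ^ 2 * (D : ℝ) := h2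
    have h1δ : (0:ℝ) < 1 - δ := by linarith
    have hTnn : 0 ≤ (1 - δ) * α * (D : ℝ) := by positivity
    have hsq : ((1 - δ) * α * D) ^ 2 ≤ T ^ 2 := by nlinarith
    have hmul : r * S ≤ r * ((1 + δ) * α ^ 2 * D) :=
      mul_le_mul_of_nonneg_left hS1 hrpos.le
    have heq : r * ((1 + δ) * α ^ 2 * (D:ℝ)) = ((1 - δ) * α * D) ^ 2 := by
      rw [hr]
      field_simp
    linarith
  have hTpos : 0 < T := by
    have h1δ : (0:ℝ) < 1 - δ := by linarith
    have : (0:ℝ) < (1 - δ) * α * D := by positivity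
    linarith [h1]
  have hrkS : r * S ≤ (k : ℝ) * S := by linarith
  have hS0 : S = 0 := by
    by_contra hS0
    have hSp : 0 < S := lt_of_le_of_ne hSnn (Ne.symm hS0)
    have : 0 < (r - k) * S := mul_pos (by linarith) hSp
    nlinarith
  have hT2 : T ^ 2 ≤ 0 := by
    calc T ^ 2 ≤ ∫ ω, f ω ^ 2 ∂μ := hjensen
      _ ≤ (k : ℝ) * S := hintle
      _ = 0 := by rw [hS0, mul_zero]
  nlinarith [pow_pos hTpos 2]
end
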